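/- Let K be a separable complex Hilbert space, let (x_n)_{n∈ℕ} and (y_n)_{n∈ℕ} be orthonormal sequences in K, and let (a_n)_{n∈ℕ} and (b_n)_{n∈ℕ} be nonincreasing sequences of strictly positive real numbers tending to 0. Let A and B be the compact positive operators on K defined by A x = ∑_n a_n ⟨x, x_n⟩ x_n and B x = ∑_n b_n ⟨x, y_n⟩ y_n, and put H = K ⊕ K. If the systems (H; K ⊕ 0, graph(A)) and (H; K ⊕ 0, graph(B)) are boundedly isomorphic, then for every real α > 0 the series ∑_n a_n^α converges if and only if ∑_n b_n^α converges; in particular A and B belong to exactly the same Schatten classes C^α, so Sh(A) = Sh(B). -/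

import Mathlib

open Filter

noncomputable section
set_option linter.unusedSectionVars false

local notation "⟪" x ", " y "⟫" => @inner ℂ _ _ x y

variable {K : Type*} [NormedAddCommGroup K] [InnerProductSpace ℂ K] [CompleteSpace K]

lemma orthonormal_norm_tsum {v : ℕ → K} (hv : Orthonormal ℂ v) (c : ℕ → ℂ)
    (hc : Summable fun n => ‖c n‖ ^ 2) :
    ‖∑' n, c n • v n‖ ^ 2 = ∑' n, ‖c n‖ ^ 2 := by
  have hfam := hv.orthogonalFamily
  have hsum : Summable fun n => c n • v n := by
    have := (hfam.summable_iff_norm_sq_summable c).2 hc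
    simpa [LinearIsometry.toSpanSingleton_apply] using this
  have h1 := hsum.hasSum
  have hcont : Continuous fun z : K => ‖z‖ ^ 2 := continuous_norm.pow 2
  have h2 := (hcont.tendsto _).comp h1
  have h3 : Tendsto (fun s : Finset ℕ => ∑ i ∈ s, ‖c i‖ ^ 2) atTop
      (nhds (‖∑' n, c n • v n‖ ^ 2)) := by
    refine h2.congr fun s => ?_
    simpa [LinearIsometry.toSpanSingleton_apply] using hfam.norm_sum c s
  exact tendsto_nhds_unique h3 hc.hasSum

lemma opB_norm_le {y : ℕ → K} (hy : Orthonormal ℂ y) {b : ℕ → ℝ} (hb_anti : Antitone b)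
    (hb_pos : ∀ n, 0 < b n) (B : K →L[ℂ] K)
    (hB : ∀ x : K, B x = ∑' n : ℕ, ((b n : ℂ) * ⟪y n, x⟫) • y n)
    (n : ℕ) (z : K) (horth : ∀ k, k < n → ⟪y k, z⟫ = 0) :
    ‖B z‖ ≤ b n * ‖z‖ := by
  set c : ℕ → ℂ := fun m => (b m : ℂ) * ⟪y m, z⟫ with hc_def
  have hnorm : ∀ m, ‖c m‖ ^ 2 = (b m) ^ 2 * ‖⟪y m, z⟫‖ ^ 2 := by
    intro m
    simp [hc_def, norm_mul, mul_pow, Complex.norm_real, Real.norm_eq_abs,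
      abs_of_pos (hb_pos m)]
  have hBes : Summable fun m => ‖⟪y m, z⟫‖ ^ 2 := hy.inner_products_summable z
  have hsum_c : Summable fun m => ‖c m‖ ^ 2 := by
    apply Summable.of_nonneg_of_le (fun m => sq_nonneg _) (fun m => ?_) (hBes.mul_left ((b 0) ^ 2))
    rw [hnorm]
    apply mul_le_mul_of_nonneg_right _ (sq_nonneg _)
    exact pow_le_pow_left₀ (hb_pos m).le (hb_anti (Nat.zero_le m)) 2
  have key : ‖B z‖ ^ 2 ≤ (b n) ^ 2 * ‖z‖ ^ 2 := by
    rw [hB z]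
    rw [show (∑' (m : ℕ), ((b m : ℂ) * ⟪y m, z⟫) • y m) = ∑' m, c m • y m from rfl,
      orthonormal_norm_tsum hy c hsum_c]
    calc ∑' m, ‖c m‖ ^ 2 ≤ ∑' m, (b n) ^ 2 * ‖⟪y m, z⟫‖ ^ 2 := by
          apply Summable.tsum_le_tsum _ hsum_c (hBes.mul_left _)
          intro m
          rcases lt_or_ge m n with h | h
          · have : c m = 0 := by simp [hc_def, horth m h]
            simp only [this, norm_zero, ne_eq, OfNat.ofNat_ne_zero, not_false_eq_true,
              zero_pow]
            positivity
          · rw [hnorm]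
            apply mul_le_mul_of_nonneg_right _ (sq_nonneg _)
            exact pow_le_pow_left₀ (hb_pos m).le (hb_anti h) 2
      _ = (b n) ^ 2 * ∑' m, ‖⟪y m, z⟫‖ ^ 2 := tsum_mul_left
      _ ≤ (b n) ^ 2 * ‖z‖ ^ 2 :=
          mul_le_mul_of_nonneg_left (hy.tsum_inner_products_le z) (sq_nonneg _)
  nlinarith [norm_nonneg (B z), norm_nonneg z, hb_pos n,
    mul_nonneg (hb_pos n).le (norm_nonneg z)]

lemma opA_norm_ge {x : ℕ → K} (hx : Orthonormal ℂ x) {a : ℕ → ℝ} (ha_anti : Antitone a)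
    (ha_pos : ∀ n, 0 < a n) (A : K →L[ℂ] K)
    (hA : ∀ z : K, A z = ∑' n : ℕ, ((a n : ℂ) * ⟪x n, z⟫) • x n)
    (n : ℕ) (z : K)
    (hz : z ∈ Submodule.span ℂ (Set.range fun i : Fin (n + 1) => x i)) :
    a n * ‖z‖ ≤ ‖A z‖ := by
  classical
  obtain ⟨d, hd⟩ := (Submodule.mem_span_range_iff_exists_fun ℂ).1 hz
  set e : ℕ → ℂ := fun m => if h : m < n + 1 then d ⟨m, h⟩ else 0 with he
  have hze : z = ∑ m ∈ Finset.range (n + 1), e m • x m := by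
    rw [← hd]
    rw [← Fin.sum_univ_eq_sum_range (fun m => e m • x m) (n + 1)]
    apply Finset.sum_congr rfl
    intro i _
    simp [he, i.isLt, Fin.is_le]
  have hem : ∀ m, n + 1 ≤ m → e m = 0 := fun m hm => dif_neg (by omega)
  have hinner : ∀ m, ⟪x m, z⟫ = e m := by
    intro m
    rcases lt_or_ge m (n + 1) with h | h
    · rw [hze]
      exact hx.inner_right_sum e (Finset.mem_range.2 h)
    · rw [hze, inner_sum, hem m h]
      apply Finset.sum_eq_zero
      intro k hk
      have hkm : m ≠ k := by have := Finset.mem_range.1 hk; omega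
      rw [inner_smul_right, hx.2 hkm, mul_zero]
  have hAz : A z = ∑ m ∈ Finset.range (n + 1), ((a m : ℂ) * e m) • x m := by
    rw [hA z]
    have : (fun m : ℕ => ((a m : ℂ) * ⟪x m, z⟫) • x m)
        = fun m => ((a m : ℂ) * e m) • x m := funext fun m => by rw [hinner]
    rw [this]
    apply tsum_eq_sum
    intro m hm
    rw [hem m (by simpa using hm)]
    simp
  have hfam := hx.orthogonalFamily
  have h1 : ‖z‖ ^ 2 = ∑ m ∈ Finset.range (n + 1), ‖e m‖ ^ 2 := by
    rw [hze]
    simpa [LinearIsometry.toSpanSingleton_apply] using hfam.norm_sum e (Finset.range (n + 1))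
  have h2 : ‖A z‖ ^ 2 = ∑ m ∈ Finset.range (n + 1), ‖(a m : ℂ) * e m‖ ^ 2 := by
    rw [hAz]
    simpa [LinearIsometry.toSpanSingleton_apply] using
      hfam.norm_sum (fun m => (a m : ℂ) * e m) (Finset.range (n + 1))
  have h3 : (a n) ^ 2 * ‖z‖ ^ 2 ≤ ‖A z‖ ^ 2 := by
    rw [h1, h2, Finset.mul_sum]
    apply Finset.sum_le_sum
    intro m hm
    have hm' : m ≤ n := by simpa [Nat.lt_succ_iff] using Finset.mem_range.1 hm
    have hh : ‖(a m : ℂ) * e m‖ ^ 2 = (a m) ^ 2 * ‖e m‖ ^ 2 := by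
      simp [norm_mul, mul_pow, Complex.norm_real, Real.norm_eq_abs, abs_of_pos (ha_pos m)]
    rw [hh]
    apply mul_le_mul_of_nonneg_right _ (sq_nonneg _)
    exact pow_le_pow_left₀ (ha_pos n).le (ha_anti hm') 2
  nlinarith [norm_nonneg z, norm_nonneg (A z), ha_pos n,
    mul_nonneg (ha_pos n).le (norm_nonneg z)]

lemma key_compare {xseq yseq : ℕ → K} (hx : Orthonormal ℂ xseq) (hy : Orthonormal ℂ yseq)
    {a b : ℕ → ℝ} (ha_anti : Antitone a) (hb_anti : Antitone b)
    (ha_pos : ∀ n, 0 < a n) (hb_pos : ∀ n, 0 < b n)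
    (A B : K →L[ℂ] K)
    (hA : ∀ z : K, A z = ∑' n : ℕ, ((a n : ℂ) * ⟪xseq n, z⟫) • xseq n)
    (hB : ∀ z : K, B z = ∑' n : ℕ, ((b n : ℂ) * ⟪yseq n, z⟫) • yseq n)
    (V : (K × K) ≃L[ℂ] (K × K))
    (h1 : V '' (((⊤ : Submodule ℂ K).prod (⊥ : Submodule ℂ K)) : Set (K × K)) =
        (((⊤ : Submodule ℂ K).prod (⊥ : Submodule ℂ K)) : Set (K × K)))
    (h2 : V '' ((LinearMap.graph (A : K →ₗ[ℂ] K)) : Set (K × K)) =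
        ((LinearMap.graph (B : K →ₗ[ℂ] K)) : Set (K × K))) :
    ∃ C : ℝ, 0 < C ∧ ∀ n, a n ≤ C * b n := by
  classical
  set X : Set (K × K) := (((⊤ : Submodule ℂ K).prod (⊥ : Submodule ℂ K)) : Set (K × K)) with hX
  have hmemX : ∀ p : K × K, p ∈ X ↔ p.2 = 0 := by
    intro p
    simp only [hX, SetLike.mem_coe, Submodule.mem_prod, Submodule.mem_top,
      Submodule.mem_bot, true_and]
  have hV2zero : ∀ u : K, (V (u, 0)).2 = 0 := by
    intro u
    have hmm : ((u, (0 : K)) : K × K) ∈ X := (hmemX _).2 rfl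
    have : V (u, 0) ∈ X := h1 ▸ Set.mem_image_of_mem V hmm
    exact (hmemX _).1 this
  have hsymmX : V.symm '' X = X := by
    conv_lhs => rw [← h1, ← Set.image_comp]
    simp
  have hV2zero' : ∀ u : K, (V.symm (u, 0)).2 = 0 := by
    intro u
    have hmm : ((u, (0 : K)) : K × K) ∈ X := (hmemX _).2 rfl
    have : V.symm (u, 0) ∈ X := hsymmX ▸ Set.mem_image_of_mem V.symm hmm
    exact (hmemX _).1 this
  have hsplit : ∀ (T : (K × K) ≃L[ℂ] (K × K)) (p : K × K),
      (T p).2 = (T (p.1, 0)).2 + (T (0, p.2)).2 := by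
    intro T p
    have hp : ((p.1, (0 : K)) : K × K) + ((0 : K), p.2) = p := by simp
    calc (T p).2 = (T ((p.1, 0) + (0, p.2))).2 := by rw [hp]
      _ = ((T (p.1, 0)) + T (0, p.2)).2 := by rw [map_add]
      _ = (T (p.1, 0)).2 + (T (0, p.2)).2 := rfl
  set S : K →L[ℂ] K := (ContinuousLinearMap.fst ℂ K K).comp
    ((V : (K × K) →L[ℂ] (K × K)).comp ((ContinuousLinearMap.id ℂ K).prod A)) with hSdef
  have hS : ∀ z : K, S z = (V (z, A z)).1 := fun z => rfl
  set W' : K →L[ℂ] K := (ContinuousLinearMap.snd ℂ K K).comp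
    ((V.symm : (K × K) →L[ℂ] (K × K)).comp (ContinuousLinearMap.inr ℂ K K)) with hW'def
  have hW' : ∀ z : K, W' z = (V.symm (0, z)).2 := fun z => rfl
  have hgraph : ∀ z : K, (V (z, A z)).2 = B (S z) := by
    intro z
    have hmem : (z, A z) ∈ ((LinearMap.graph (A : K →ₗ[ℂ] K)) : Set (K × K)) := by
      simp [SetLike.mem_coe, LinearMap.mem_graph_iff]
    have hmem2 : V (z, A z) ∈ ((LinearMap.graph (B : K →ₗ[ℂ] K)) : Set (K × K)) :=
      h2 ▸ Set.mem_image_of_mem V hmem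
    have := (LinearMap.mem_graph_iff _ _).1 hmem2
    simpa [hS] using this
  have hWAB : ∀ z : K, (V (0, A z)).2 = B (S z) := by
    intro z
    have h := hgraph z
    rw [hsplit V (z, A z)] at h
    simpa [hV2zero z] using h
  have hrecover : ∀ u : K, W' ((V (0, u)).2) = u := by
    intro u
    have hs : V.symm (V (0, u)) = (0, u) := V.symm_apply_apply _
    have h := hsplit V.symm (V (0, u))
    rw [hs, hV2zero' (V (0, u)).1, zero_add] at h
    simpa using (hW' ((V (0, u)).2)).trans h.symm
  have hbound : ∀ z : K, ‖A z‖ ≤ ‖W'‖ * ‖B (S z)‖ := by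
    intro z
    have h : A z = W' (B (S z)) := by rw [← hWAB z]; exact (hrecover (A z)).symm
    rw [h]
    exact W'.le_opNorm _
  refine ⟨max 1 (‖W'‖ * ‖S‖), lt_of_lt_of_le one_pos (le_max_left _ _), fun n => ?_⟩
  set M := Submodule.span ℂ (Set.range fun i : Fin (n + 1) => xseq i) with hM
  haveI : FiniteDimensional ℂ M := FiniteDimensional.span_of_finite ℂ (Set.finite_range _)
  have hli : LinearIndependent ℂ (fun i : Fin (n + 1) => xseq i) := by
    have := hx.linearIndependent
    exact this.comp _ Fin.val_injective
  have hrank : Module.finrank ℂ M = n + 1 := by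
    rw [hM, finrank_span_eq_card hli, Fintype.card_fin]
  set φ : M →ₗ[ℂ] (Fin n → ℂ) := LinearMap.pi
    (fun k : Fin n => (innerSL ℂ (yseq k)).toLinearMap ∘ₗ (S : K →ₗ[ℂ] K) ∘ₗ M.subtype)
    with hφdef
  obtain ⟨z0, hz0mem, hz0ne⟩ : ∃ z0 ∈ LinearMap.ker φ, z0 ≠ 0 := by
    by_contra h
    push_neg at h
    have hker : LinearMap.ker φ = ⊥ := by
      rw [eq_bot_iff]
      intro m hm
      by_contra hne
      exact hne (h m hm)
    have hinj : Function.Injective φ := LinearMap.ker_eq_bot.1 hker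
    have hle := LinearMap.finrank_le_finrank_of_injective hinj
    rw [hrank, Module.finrank_pi, Fintype.card_fin] at hle
    omega
  have horth : ∀ k, k < n → ⟪yseq k, S (z0 : K)⟫ = 0 := by
    intro k hk
    have h0 : φ z0 = 0 := hz0mem
    have := congrFun h0 ⟨k, hk⟩
    simpa [hφdef, LinearMap.pi_apply] using this
  have hz0K : (z0 : K) ≠ 0 := by
    simpa [Submodule.coe_eq_zero] using hz0ne
  have hz0norm : 0 < ‖(z0 : K)‖ := norm_pos_iff.2 hz0K
  have hP1 : a n * ‖(z0 : K)‖ ≤ ‖A (z0 : K)‖ :=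
    opA_norm_ge hx ha_anti ha_pos A hA n (z0 : K) z0.2
  have hP2 : ‖B (S (z0 : K))‖ ≤ b n * ‖S (z0 : K)‖ :=
    opB_norm_le hy hb_anti hb_pos B hB n (S (z0 : K)) horth
  have hSz : ‖S (z0 : K)‖ ≤ ‖S‖ * ‖(z0 : K)‖ := S.le_opNorm _
  have hchain : a n * ‖(z0 : K)‖ ≤ (‖W'‖ * ‖S‖ * b n) * ‖(z0 : K)‖ := by
    calc a n * ‖(z0 : K)‖ ≤ ‖A (z0 : K)‖ := hP1
      _ ≤ ‖W'‖ * ‖B (S (z0 : K))‖ := hbound _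
      _ ≤ ‖W'‖ * (b n * ‖S (z0 : K)‖) :=
          mul_le_mul_of_nonneg_left hP2 (norm_nonneg _)
      _ ≤ ‖W'‖ * (b n * (‖S‖ * ‖(z0 : K)‖)) := by
          apply mul_le_mul_of_nonneg_left _ (norm_nonneg _)
          exact mul_le_mul_of_nonneg_left hSz (hb_pos n).le
      _ = (‖W'‖ * ‖S‖ * b n) * ‖(z0 : K)‖ := by ring
  have h4 : a n ≤ ‖W'‖ * ‖S‖ * b n := le_of_mul_le_mul_right (by linarith) hz0norm
  calc a n ≤ ‖W'‖ * ‖S‖ * b n := h4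
    _ ≤ max 1 (‖W'‖ * ‖S‖) * b n :=
        mul_le_mul_of_nonneg_right (le_max_right _ _) (hb_pos n).le


lemma summable_rpow_of_le {a b : ℕ → ℝ} (ha_pos : ∀ n, 0 < a n) (hb_pos : ∀ n, 0 < b n)
    {C : ℝ} (hC : 0 < C) (h : ∀ n, a n ≤ C * b n) {α : ℝ} (hα : 0 < α)
    (hb : Summable fun n => b n ^ α) : Summable fun n => a n ^ α := by
  apply Summable.of_nonneg_of_le (fun n => Real.rpow_nonneg (ha_pos n).le α) (fun n => ?_)
    (hb.mul_left (C ^ α))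
  calc a n ^ α ≤ (C * b n) ^ α := Real.rpow_le_rpow (ha_pos n).le (h n) hα.le
    _ = C ^ α * b n ^ α := Real.mul_rpow hC.le (hb_pos n).le

end

/- STATEMENT 4: With A, B compact positive operators as in Statement 2, if the systems
(K ⊕ K; K ⊕ 0, graph A) and (K ⊕ K; K ⊕ 0, graph B) are boundedly isomorphic, then for
every α > 0 the series ∑ aₙ^α converges iff ∑ bₙ^α converges (A and B lie in the same
Schatten classes, so Sh(A) = Sh(B)). -/

noncomputable section

theorem boundedly_isomorphic_graphs_same_schatten_classes
    {K : Type*} [NormedAddCommGroup K] [InnerProductSpace ℂ K] [CompleteSpace K]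
    [TopologicalSpace.SeparableSpace K]
    (xseq yseq : ℕ → K) (hx : Orthonormal ℂ xseq) (hy : Orthonormal ℂ yseq)
    (a b : ℕ → ℝ)
    (ha_anti : Antitone a) (hb_anti : Antitone b)
    (ha_pos : ∀ n, 0 < a n) (hb_pos : ∀ n, 0 < b n)
    (ha_lim : Filter.Tendsto a Filter.atTop (nhds 0))
    (hb_lim : Filter.Tendsto b Filter.atTop (nhds 0))
    (A B : K →L[ℂ] K)
    (hA : ∀ x : K, A x = ∑' n : ℕ, ((a n : ℂ) * (inner ℂ (xseq n) x : ℂ)) • xseq n)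
    (hB : ∀ x : K, B x = ∑' n : ℕ, ((b n : ℂ) * (inner ℂ (yseq n) x : ℂ)) • yseq n)
    (hiso : ∃ V : (K × K) ≃L[ℂ] (K × K),
      V '' (((⊤ : Submodule ℂ K).prod (⊥ : Submodule ℂ K)) : Set (K × K)) =
        (((⊤ : Submodule ℂ K).prod (⊥ : Submodule ℂ K)) : Set (K × K)) ∧
      V '' ((LinearMap.graph (A : K →ₗ[ℂ] K)) : Set (K × K)) =
        ((LinearMap.graph (B : K →ₗ[ℂ] K)) : Set (K × K))) :
    ∀ α : ℝ, 0 < α → ((Summable fun n => a n ^ α) ↔ (Summable fun n => b n ^ α)) := by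
  obtain ⟨V, h1, h2⟩ := hiso
  have h1' : V.symm '' (((⊤ : Submodule ℂ K).prod (⊥ : Submodule ℂ K)) : Set (K × K)) =
      (((⊤ : Submodule ℂ K).prod (⊥ : Submodule ℂ K)) : Set (K × K)) := by
    conv_lhs => rw [← h1, ← Set.image_comp]
    simp
  have h2' : V.symm '' ((LinearMap.graph (B : K →ₗ[ℂ] K)) : Set (K × K)) =
      ((LinearMap.graph (A : K →ₗ[ℂ] K)) : Set (K × K)) := by
    conv_lhs => rw [← h2, ← Set.image_comp]
    simp
  obtain ⟨C₁, hC₁, hab⟩ := key_compare hx hy ha_anti hb_anti ha_pos hb_pos A B hA hB V h1 h2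
  obtain ⟨C₂, hC₂, hba⟩ := key_compare hy hx hb_anti ha_anti hb_pos ha_pos B A hB hA V.symm h1' h2'
  intro α hα
  constructor
  · exact fun h => summable_rpow_of_le hb_pos ha_pos hC₂ hba hα h
  · exact fun h => summable_rpow_of_le ha_pos hb_pos hC₁ hab hα h

end
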